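/- Let n ≥ 1 and let p_1,…,p_n and q_1,…,q_n be natural numbers. Let G⁻ be the group with presentation ⟨b_1,…,b_n, t | b_j^{2} = 1 for 1 ≤ j ≤ n, b_i^{2^{p_i}} = b_{i+1}^{2^{q_i}} for 1 ≤ i ≤ n−1, t^{−1} b_n^{2^{p_n}} t = b_1^{−2^{q_n}}⟩. Then the abelianization of G⁻ is isomorphic to ℤ if and only if exactly one of the two sums p_1 + ⋯ + p_n and q_1 + ⋯ + q_n equals 0. -/

import Mathlib

/-- The relators of the group `G⁻ = ⟨b_1,…,b_n, t | b_j² = 1 (1 ≤ j ≤ n),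
b_i^{2^{p_i}} = b_{i+1}^{2^{q_i}} (1 ≤ i ≤ n−1), t⁻¹ b_n^{2^{p_n}} t = b_1^{−2^{q_n}}⟩`,
where `some i` is `b_{i+1}` and `none` is `t`. -/
def echinusNegRels (n : ℕ) (hn : 0 < n) (p q : Fin n → ℕ) :
    Set (FreeGroup (Option (Fin n))) :=
  {x | ∃ j : Fin n, x = FreeGroup.of (some j) ^ 2} ∪
  {x | ∃ i j : Fin n, (i : ℕ) + 1 = (j : ℕ) ∧
      x = FreeGroup.of (some i) ^ 2 ^ p i * (FreeGroup.of (some j) ^ 2 ^ q i)⁻¹} ∪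
  {(FreeGroup.of none)⁻¹ *
      FreeGroup.of (some ⟨n - 1, Nat.sub_lt hn Nat.one_pos⟩) ^
        2 ^ p ⟨n - 1, Nat.sub_lt hn Nat.one_pos⟩ *
      FreeGroup.of none *
      (FreeGroup.of (some ⟨0, hn⟩) ^ (-((2 : ℤ) ^ q ⟨n - 1, Nat.sub_lt hn Nat.one_pos⟩)))⁻¹}

namespace Stmt16Aux

open scoped Fin.NatCast Fin.CommRing

open Multiplicative

/-- relators map to 1 in the presented group -/
lemma mk_rel_eq_one {α : Type*} {rels : Set (FreeGroup α)} {r : FreeGroup α} (h : r ∈ rels) :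
    PresentedGroup.mk rels r = 1 :=
  (QuotientGroup.eq_one_iff r).mpr (Subgroup.subset_normalClosure h)

variable {n : ℕ} (hn : 0 < n) (p q : Fin n → ℕ)

/-- A homomorphism out of the presented group into a commutative group, from a
vertex assignment satisfying the relations. -/
def toHom {M : Type*} [CommGroup M] (v : Option (Fin n) → M)
    (h1 : ∀ j : Fin n, v (some j) ^ 2 = 1)
    (h2 : ∀ i j : Fin n, (i : ℕ) + 1 = (j : ℕ) →
      v (some i) ^ 2 ^ p i = v (some j) ^ 2 ^ q i)
    (h3 : v (some ⟨n - 1, Nat.sub_lt hn Nat.one_pos⟩) ^ 2 ^ p ⟨n - 1, Nat.sub_lt hn Nat.one_pos⟩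
        = v (some ⟨0, hn⟩) ^ (-((2 : ℤ) ^ q ⟨n - 1, Nat.sub_lt hn Nat.one_pos⟩))) :
    PresentedGroup (echinusNegRels n hn p q) →* M :=
  PresentedGroup.toGroup (f := v) (by
    intro r hr
    rcases hr with (⟨j, rfl⟩ | ⟨i, j, hij, rfl⟩) | rfl
    · simp [h1 j]
    · simp only [map_mul, map_pow, map_inv, FreeGroup.lift_apply_of]
      rw [h2 i j hij, mul_inv_cancel]
    · simp only [map_mul, map_pow, map_inv, map_zpow, FreeGroup.lift_apply_of]
      rw [h3]
      have comm4 : ∀ a b c d : M, a * b * c * d = (a * c) * (b * d) := fun a b c d => by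
        rw [mul_assoc, mul_mul_mul_comm]
      rw [comm4]
      simp [← zpow_add])

@[simp] lemma toHom_of {M : Type*} [CommGroup M] (v : Option (Fin n) → M)
    (h1 : ∀ j : Fin n, v (some j) ^ 2 = 1)
    (h2 : ∀ i j : Fin n, (i : ℕ) + 1 = (j : ℕ) →
      v (some i) ^ 2 ^ p i = v (some j) ^ 2 ^ q i)
    (h3 : v (some ⟨n - 1, Nat.sub_lt hn Nat.one_pos⟩) ^ 2 ^ p ⟨n - 1, Nat.sub_lt hn Nat.one_pos⟩
        = v (some ⟨0, hn⟩) ^ (-((2 : ℤ) ^ q ⟨n - 1, Nat.sub_lt hn Nat.one_pos⟩)))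
    (x : Option (Fin n)) :
    toHom hn p q v h1 h2 h3 (PresentedGroup.of x) = v x :=
  PresentedGroup.toGroup.of _

/-- If the abelianization of `G` is `ℤ`, there cannot be three distinct homomorphisms
`G →* Multiplicative (ZMod 2)`. -/
lemma three_homs {G : Type*} [Group G] (e : Abelianization G ≃* Multiplicative ℤ)
    (f g h : G →* Multiplicative (ZMod 2)) (hfg : f ≠ g) (hfh : f ≠ h) (hgh : g ≠ h) :
    False := by
  have key : ∀ f₁ f₂ : G →* Multiplicative (ZMod 2),
      (Abelianization.lift f₁) (e.symm (ofAdd 1)) = (Abelianization.lift f₂) (e.symm (ofAdd 1)) →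
      f₁ = f₂ := by
    intro f₁ f₂ hval
    have h1 : (Abelianization.lift f₁).comp e.symm.toMonoidHom
        = (Abelianization.lift f₂).comp e.symm.toMonoidHom := MonoidHom.ext_mint hval
    have h2 : Abelianization.lift f₁ = Abelianization.lift f₂ := by
      apply MonoidHom.ext
      intro x
      have := DFunLike.congr_fun h1 (e x)
      simpa using this
    apply MonoidHom.ext
    intro x
    have := DFunLike.congr_fun h2 (Abelianization.of x)
    simpa [Abelianization.lift_apply_of] using this
  have tri : ∀ a b c : Multiplicative (ZMod 2), a = b ∨ a = c ∨ b = c := by decide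
  rcases tri ((Abelianization.lift f) (e.symm (ofAdd 1))) ((Abelianization.lift g) (e.symm (ofAdd 1)))
      ((Abelianization.lift h) (e.symm (ofAdd 1))) with h' | h' | h'
  · exact hfg (key f g h')
  · exact hfh (key f h h')
  · exact hgh (key g h h')


section ExistsSol

variable [NeZero n]

/-- Existence of a nonzero mod-2 solution of the cyclic system when the
condition "exactly one sum is zero" fails. -/
lemma exists_sol
    (h : ((∀ i, p i = 0) ∧ (∀ i, q i = 0)) ∨ ((∃ i, p i ≠ 0) ∧ (∃ i, q i ≠ 0))) :
    ∃ s : Fin n → ZMod 2, (∃ i, s i ≠ 0) ∧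
      ∀ e : Fin n, (2 : ZMod 2) ^ p e * s e = (2 : ZMod 2) ^ q e * s (e + 1) := by
  have h20 : (2 : ZMod 2) = 0 := by decide
  have hpow : ∀ k : ℕ, k ≠ 0 → (2 : ZMod 2) ^ k = 0 := fun k hk => by
    rw [h20]; exact zero_pow hk
  rcases h with ⟨hp, hq⟩ | ⟨⟨k, hk⟩, ⟨j0, hj0⟩⟩
  · exact ⟨fun _ => 1, ⟨0, one_ne_zero⟩, fun e => by rw [hp e, hq e]⟩
  · -- find the cut edge m
    have hex : ∃ t : ℕ, q (k - 1 - (t : Fin n)) ≠ 0 :=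
      ⟨(k - 1 - j0).val, by rwa [Fin.cast_val_eq_self, sub_sub_cancel]⟩
    classical
    set t0 := Nat.find hex with ht0def
    have ht0 : q (k - 1 - (t0 : Fin n)) ≠ 0 := Nat.find_spec hex
    have hmin : ∀ t < t0, q (k - 1 - (t : Fin n)) = 0 := fun t ht => by
      have := Nat.find_min hex ht
      simpa using this
    have ht0lt : t0 < n := by
      have hle : t0 ≤ (k - 1 - j0).val := Nat.find_min' hex
        (by rwa [Fin.cast_val_eq_self, sub_sub_cancel])
      exact lt_of_le_of_lt hle (k - 1 - j0).isLt
    set m : Fin n := k - 1 - (t0 : Fin n) with hmdef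
    set r : Fin n → ℕ := fun i => ((i - (m + 1)).val) with hrdef
    have hm1 : m + 1 = k - (t0 : Fin n) := by rw [hmdef]; ring
    have hrk : r k = t0 := by
      rw [hrdef]
      simp only [hm1, sub_sub_cancel]
      exact Fin.val_cast_of_lt ht0lt
    have hrepr : ∀ i : Fin n, (m + 1) + ((r i : ℕ) : Fin n) = i := fun i => by
      rw [hrdef]; simp [Fin.cast_val_eq_self]
    -- edges strictly before k in the walk have q = 0
    have hbefore : ∀ e : Fin n, r e < t0 → q e = 0 := by
      intro e hre
      have h1 : ((t0 - 1 - r e : ℕ) : Fin n) = (t0 : Fin n) - 1 - ((r e : ℕ) : Fin n) := by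
        rw [Nat.cast_sub (by omega : r e ≤ t0 - 1), Nat.cast_sub (by omega : 1 ≤ t0)]
        push_cast
        ring
      have h2 : k - 1 - ((t0 - 1 - r e : ℕ) : Fin n) = e := by
        conv_rhs => rw [← hrepr e]
        rw [h1, hm1]
        ring
      have := hmin (t0 - 1 - r e) (by omega)
      rwa [h2] at this
    have hrinj : ∀ e : Fin n, r e = r k → e = k := by
      intro e hre
      have : e - (m + 1) = k - (m + 1) := Fin.val_injective hre
      exact sub_left_injective this
    -- the propagation
    set u : ℕ → ZMod 2 := fun t =>
      Nat.rec (motive := fun _ => ZMod 2) 1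
        (fun t ih =>
          if p ((m + 1) + (t : Fin n)) = 0 ∧ q ((m + 1) + (t : Fin n)) = 0 then ih else 0) t
      with hudef
    have hu0 : u 0 = 1 := rfl
    have husucc : ∀ t : ℕ,
        u (t + 1) = if p ((m + 1) + (t : Fin n)) = 0 ∧ q ((m + 1) + (t : Fin n)) = 0
          then u t else 0 := fun t => rfl
    have humono : ∀ t₂ t₁ : ℕ, t₁ ≤ t₂ → u t₁ = 0 → u t₂ = 0 := by
      intro t₂
      induction t₂ with
      | zero =>
        intro t₁ hle h0
        have ht1 : t₁ = 0 := Nat.le_zero.mp hle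
        rwa [ht1] at h0
      | succ t ih =>
        intro t₁ hle h0
        rcases Nat.eq_or_lt_of_le hle with heq | hlt
        · rwa [heq] at h0
        · have ht : u t = 0 := ih t₁ (by omega) h0
          rw [husucc t, ht]
          split <;> rfl
    set s : Fin n → ZMod 2 := fun i => u (r i) with hsdef
    have hrm1 : r (m + 1) = 0 := by simp [hrdef]
    have hs_m1 : s (m + 1) = 1 := by
      show u (r (m + 1)) = 1
      rw [hrm1]
      exact hu0
    have hmt0 : (m + 1) + ((t0 : ℕ) : Fin n) = k := by rw [hm1]; ring
    have hut0 : u (t0 + 1) = 0 := by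
      rw [husucc, hmt0]
      simp [hk]
    have hafter : ∀ e : Fin n, q e ≠ 0 → p e = 0 → s e = 0 := by
      intro e hqe hpe
      have hek : e ≠ k := fun h => hk (h ▸ hpe)
      have hge : ¬ (r e < t0) := fun hlt => hqe (hbefore e hlt)
      have hne : r e ≠ t0 := fun h => hek (hrinj e (by rw [h, hrk]))
      exact humono (r e) (t0 + 1) (by omega) hut0
    have hxval : ∀ e : Fin n, e ≠ m → (e - (m + 1)).val ≠ n - 1 := by
      intro e hem hval
      apply hem
      have h2 : ((n - 1 : ℕ) : Fin n) + 1 = 0 := by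
        have h3 : ((n - 1 : ℕ) : Fin n) + 1 = ((n - 1 + 1 : ℕ) : Fin n) := by push_cast; ring
        rw [h3, Nat.sub_add_cancel NeZero.one_le, Fin.natCast_self]
      have h4 : (e - (m + 1)) = ((n - 1 : ℕ) : Fin n) := by
        apply Fin.ext
        rw [hval, Fin.val_cast_of_lt (by omega : n - 1 < n)]
      calc e = (m + 1) + (e - (m + 1)) := by ring
      _ = m + ((e - (m + 1)) + 1) := by ring
      _ = m := by rw [h4, h2, add_zero]
    have hrsucc : ∀ e : Fin n, e ≠ m → r (e + 1) = r e + 1 := by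
      intro e hem
      have hv := hxval e hem
      have hlt : (e - (m + 1)).val < n := (e - (m + 1)).isLt
      have h1 : (e + 1) - (m + 1) = (e - (m + 1)) + 1 := by ring
      show ((e + 1) - (m + 1)).val = (e - (m + 1)).val + 1
      have h2 : (e - (m + 1)) + 1 = (((e - (m + 1)).val + 1 : ℕ) : Fin n) := by
        push_cast [Fin.cast_val_eq_self]
        ring
      rw [h1, h2, Fin.val_cast_of_lt (by omega)]
    have hsucc : ∀ e : Fin n, e ≠ m → s (e + 1) = if p e = 0 ∧ q e = 0 then s e else 0 := by
      intro e hem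
      show u (r (e + 1)) = if p e = 0 ∧ q e = 0 then u (r e) else 0
      rw [hrsucc e hem, husucc, hrepr e]
    refine ⟨s, ⟨m + 1, by rw [hs_m1]; exact one_ne_zero⟩, ?_⟩
    intro e
    by_cases hqe : q e = 0
    · have hem : e ≠ m := fun h => ht0 (h ▸ hqe)
      by_cases hpe : p e = 0
      · rw [hsucc e hem, if_pos ⟨hpe, hqe⟩, hpe, hqe]
      · rw [hsucc e hem, if_neg (fun hc => hpe hc.1)]
        rw [hpow _ hpe, zero_mul, mul_zero]
    · rw [hpow _ hqe, zero_mul]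
      by_cases hpe : p e = 0
      · rw [hafter e hqe hpe, mul_zero]
      · rw [hpow _ hpe, zero_mul]

/-- In a commutative group, if the `B i` satisfy the cyclic relations and exactly
one of the sums vanishes, then all `B i` are trivial. -/
lemma allB {M : Type*} [CommGroup M] (B : Fin n → M)
    (hB2 : ∀ j, B j ^ 2 = 1)
    (hstep : ∀ e : Fin n, B e ^ 2 ^ p e = B (e + 1) ^ 2 ^ q e)
    (h : ((∀ i, p i = 0) ∧ (∑ i, q i) ≠ 0) ∨ ((∀ i, q i = 0) ∧ (∑ i, p i) ≠ 0)) :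
    ∀ i, B i = 1 := by
  have key : ∀ (i : Fin n) (S : ℕ), S ≠ 0 → B i = B i ^ 2 ^ S → B i = 1 := by
    intro i S hS hBi
    obtain ⟨S', rfl⟩ : ∃ S', S = S' + 1 := ⟨S - 1, by omega⟩
    have h2 : (2 : ℕ) ^ (S' + 1) = 2 * 2 ^ S' := by ring
    rw [hBi, h2, pow_mul, hB2, one_pow]
  have sum_eq : ∀ (f : Fin n → ℕ) (i : Fin n),
      (∑ t ∈ Finset.range n, f (i + (t : Fin n))) = ∑ j, f j := by
    intro f i
    rw [← Fin.sum_univ_eq_sum_range (fun t => f (i + (t : Fin n))) n]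
    simp only [Fin.cast_val_eq_self]
    exact Fintype.sum_equiv (Equiv.addLeft i) _ _ (fun t => rfl)
  rcases h with ⟨hp, hq⟩ | ⟨hq, hp⟩
  · have step : ∀ e, B e = B (e + 1) ^ 2 ^ q e := fun e => by
      have h' := hstep e
      rwa [hp e, pow_zero, pow_one] at h'
    have claim : ∀ (r : ℕ) (i : Fin n),
        B i = B (i + (r : Fin n)) ^ 2 ^ (∑ t ∈ Finset.range r, q (i + (t : Fin n))) := by
      intro r
      induction r with
      | zero => intro i; simp
      | succ r ih =>
        intro i
        calc B i = B (i + 1) ^ 2 ^ q i := step i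
        _ = (B ((i + 1) + (r : Fin n)) ^
              2 ^ (∑ t ∈ Finset.range r, q ((i + 1) + (t : Fin n)))) ^ 2 ^ q i := by
            rw [← ih (i + 1)]
        _ = B (i + ((r + 1 : ℕ) : Fin n)) ^
              2 ^ (∑ t ∈ Finset.range (r + 1), q (i + (t : Fin n))) := by
            have e1 : (i + 1) + (r : Fin n) = i + ((r + 1 : ℕ) : Fin n) := by
              push_cast; ring
            have e2 : ∀ t : ℕ, (i + 1) + (t : Fin n) = i + ((t + 1 : ℕ) : Fin n) := by
              intro t; push_cast; ring
            have e3 : (∑ t ∈ Finset.range r, q ((i + 1) + (t : Fin n))) + q i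
                = ∑ t ∈ Finset.range (r + 1), q (i + (t : Fin n)) := by
              rw [Finset.sum_range_succ']
              congr 1
              · exact Finset.sum_congr rfl (fun t _ => by rw [e2 t])
              · rw [Nat.cast_zero, add_zero]
            rw [← pow_mul, ← pow_add, e1, e3]
    intro i
    apply key i (∑ j, q j) hq
    have h' := claim n i
    rw [Fin.natCast_self, add_zero, sum_eq q i] at h'
    exact h'
  · have step : ∀ e, B (e + 1) = B e ^ 2 ^ p e := fun e => by
      have h' := hstep e
      rw [hq e, pow_zero, pow_one] at h'
      exact h'.symm
    have claim : ∀ (r : ℕ) (i : Fin n),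
        B (i + (r : Fin n)) = B i ^ 2 ^ (∑ t ∈ Finset.range r, p (i + (t : Fin n))) := by
      intro r
      induction r with
      | zero => intro i; simp
      | succ r ih =>
        intro i
        have e1 : i + ((r + 1 : ℕ) : Fin n) = (i + (r : Fin n)) + 1 := by push_cast; ring
        calc B (i + ((r + 1 : ℕ) : Fin n)) = B ((i + (r : Fin n)) + 1) := by rw [e1]
        _ = B (i + (r : Fin n)) ^ 2 ^ p (i + (r : Fin n)) := step _
        _ = (B i ^ 2 ^ (∑ t ∈ Finset.range r, p (i + (t : Fin n)))) ^ 2 ^ p (i + (r : Fin n)) := by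
            rw [← ih i]
        _ = B i ^ 2 ^ (∑ t ∈ Finset.range (r + 1), p (i + (t : Fin n))) := by
            rw [← pow_mul, ← pow_add, Finset.sum_range_succ]
    intro i
    apply key i (∑ j, p j) hp
    have h' := claim n i
    rw [Fin.natCast_self, add_zero, sum_eq p i] at h'
    exact h'

lemma inv_of_sq {A : Type*} [Group A] {x : A} (h : x ^ 2 = 1) : x⁻¹ = x :=
  inv_eq_of_mul_eq_one_right (by rw [← pow_two]; exact h)

/-- squares of generators vanish in the abelianization -/
lemma ab_sq (j : Fin n) :
    (Abelianization.of
      (PresentedGroup.of (rels := echinusNegRels n hn p q) (some j))) ^ 2 = 1 := by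
  have h : PresentedGroup.mk (echinusNegRels n hn p q) (FreeGroup.of (some j) ^ 2) = 1 :=
    mk_rel_eq_one (Set.mem_union_left _ (Set.mem_union_left _ ⟨j, rfl⟩))
  have h2 : Abelianization.of ((PresentedGroup.mk (echinusNegRels n hn p q))
      (FreeGroup.of (some j) ^ 2)) = Abelianization.of 1 := by rw [h]
  rwa [map_pow, map_pow, map_one] at h2

/-- the cyclic step relations in the abelianization -/
lemma ab_step (i : Fin n) :
    (Abelianization.of (PresentedGroup.of (rels := echinusNegRels n hn p q) (some i)))
        ^ 2 ^ p i
      = (Abelianization.of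
          (PresentedGroup.of (rels := echinusNegRels n hn p q) (some (i + 1)))) ^ 2 ^ q i := by
  set R := echinusNegRels n hn p q with hR
  set F : FreeGroup (Option (Fin n)) →* Abelianization (PresentedGroup R) :=
    Abelianization.of.comp (PresentedGroup.mk R) with hF
  have hFof : ∀ x, F (FreeGroup.of x)
      = Abelianization.of (PresentedGroup.of (rels := R) x) := fun x => rfl
  by_cases hi : (i : ℕ) + 1 < n
  · -- interior edge
    have hj : (i + 1 : Fin n).val = (i : ℕ) + 1 := by
      have h1n : (1 : ℕ) % n = 1 := Nat.mod_eq_of_lt (by omega)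
      rw [Fin.val_add, Fin.val_one', h1n, Nat.mod_eq_of_lt hi]
    have hmem : FreeGroup.of (some i) ^ 2 ^ p i *
        (FreeGroup.of (some (i + 1)) ^ 2 ^ q i)⁻¹ ∈ R :=
      Set.mem_union_left _ (Set.mem_union_right _ ⟨i, i + 1, hj.symm, rfl⟩)
    have h : F (FreeGroup.of (some i) ^ 2 ^ p i *
        (FreeGroup.of (some (i + 1)) ^ 2 ^ q i)⁻¹) = 1 := by
      show Abelianization.of (PresentedGroup.mk R _) = 1
      rw [mk_rel_eq_one hmem, map_one]
    rw [map_mul, map_inv, map_pow, map_pow, hFof, hFof] at h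
    exact mul_inv_eq_one.mp h
  · -- wrap-around edge
    have hival : (i : ℕ) = n - 1 := by have := i.isLt; omega
    have hL : i = (⟨n - 1, Nat.sub_lt hn Nat.one_pos⟩ : Fin n) := Fin.ext hival
    have hZ : i + 1 = (⟨0, hn⟩ : Fin n) := by
      apply Fin.ext
      rw [Fin.val_add, Fin.val_one', hival]
      show (n - 1 + 1 % n) % n = 0
      rcases Nat.lt_or_ge 1 n with h1 | h1
      · rw [Nat.mod_eq_of_lt h1, Nat.sub_add_cancel (by omega), Nat.mod_self]
      · have hn1 : n = 1 := by omega
        subst hn1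
        rfl
    have hmem3 : (FreeGroup.of none)⁻¹ *
        FreeGroup.of (some ⟨n - 1, Nat.sub_lt hn Nat.one_pos⟩) ^
          2 ^ p ⟨n - 1, Nat.sub_lt hn Nat.one_pos⟩ *
        FreeGroup.of none *
        (FreeGroup.of (some ⟨0, hn⟩) ^
          (-((2 : ℤ) ^ q ⟨n - 1, Nat.sub_lt hn Nat.one_pos⟩)))⁻¹ ∈ R :=
      Set.mem_union_right _ rfl
    have h : F ((FreeGroup.of none)⁻¹ *
        FreeGroup.of (some ⟨n - 1, Nat.sub_lt hn Nat.one_pos⟩) ^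
          2 ^ p ⟨n - 1, Nat.sub_lt hn Nat.one_pos⟩ *
        FreeGroup.of none *
        (FreeGroup.of (some ⟨0, hn⟩) ^
          (-((2 : ℤ) ^ q ⟨n - 1, Nat.sub_lt hn Nat.one_pos⟩)))⁻¹) = 1 := by
      show Abelianization.of (PresentedGroup.mk R _) = 1
      rw [mk_rel_eq_one hmem3, map_one]
    rw [map_mul, map_mul, map_mul, map_inv, map_inv, map_pow, map_zpow, hFof, hFof, hFof] at h
    rw [mul_comm (Abelianization.of (PresentedGroup.of (rels := R) none))⁻¹,
      inv_mul_cancel_right] at h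
    have h2 := mul_inv_eq_one.mp h
    have hzp : (Abelianization.of (PresentedGroup.of (rels := R) (some ⟨0, hn⟩)))
          ^ (-((2 : ℤ) ^ q ⟨n - 1, Nat.sub_lt hn Nat.one_pos⟩))
        = (Abelianization.of (PresentedGroup.of (rels := R) (some ⟨0, hn⟩)))
          ^ 2 ^ q ⟨n - 1, Nat.sub_lt hn Nat.one_pos⟩ := by
      set X := Abelianization.of (PresentedGroup.of (rels := R) (some ⟨0, hn⟩)) with hX
      have hc : ((2 : ℤ) ^ q ⟨n - 1, Nat.sub_lt hn Nat.one_pos⟩)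
          = ((2 ^ q ⟨n - 1, Nat.sub_lt hn Nat.one_pos⟩ : ℕ) : ℤ) := by push_cast; ring
      rw [zpow_neg, hc, zpow_natCast]
      apply inv_of_sq
      rw [← pow_mul, mul_comm, pow_mul]
      rw [ab_sq hn p q]
      exact one_pow _
    rw [hzp] at h2
    rw [hZ, hL]
    exact h2

end ExistsSol

end Stmt16Aux

theorem stmt16 (n : ℕ) (hn : 0 < n) (p q : Fin n → ℕ) :
    Nonempty (Abelianization (PresentedGroup (echinusNegRels n hn p q)) ≃* Multiplicative ℤ) ↔
      ((∑ i, p i = 0 ∧ ∑ i, q i ≠ 0) ∨ (∑ i, p i ≠ 0 ∧ ∑ i, q i = 0)) := by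
  haveI : NeZero n := ⟨hn.ne'⟩
  have hsum : ∀ f : Fin n → ℕ, (∑ i, f i) = 0 ↔ ∀ i, f i = 0 := fun f =>
    ⟨fun h i => Finset.sum_eq_zero_iff.mp h i (Finset.mem_univ i),
     fun h => Finset.sum_eq_zero fun i _ => h i⟩
  open Multiplicative in
  constructor
  · rintro ⟨e⟩
    by_contra hcond
    have h : ((∀ i, p i = 0) ∧ (∀ i, q i = 0)) ∨ ((∃ i, p i ≠ 0) ∧ (∃ i, q i ≠ 0)) := by
      by_cases h1 : (∑ i, p i) = 0 <;> by_cases h2 : (∑ i, q i) = 0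
      · exact Or.inl ⟨(hsum p).mp h1, (hsum q).mp h2⟩
      · exact absurd (Or.inl ⟨h1, h2⟩) hcond
      · exact absurd (Or.inr ⟨h1, h2⟩) hcond
      · refine Or.inr ⟨?_, ?_⟩
        · by_contra hall
          push_neg at hall
          exact h1 ((hsum p).mpr fun i => by simpa using hall i)
        · by_contra hall
          push_neg at hall
          exact h2 ((hsum q).mpr fun i => by simpa using hall i)
    obtain ⟨s, ⟨i0, hi0⟩, hs⟩ := Stmt16Aux.exists_sol p q h
    have hstep2 : ∀ i j : Fin n, (i : ℕ) + 1 = (j : ℕ) →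
        (2 : ZMod 2) ^ p i * s i = (2 : ZMod 2) ^ q i * s j := by
      intro i j hij
      have hjlt := j.isLt
      have hj : j = i + 1 := by
        apply Fin.ext
        have h1n : (1 : ℕ) % n = 1 := Nat.mod_eq_of_lt (by omega)
        rw [Fin.val_add, Fin.val_one', h1n, hij, Nat.mod_eq_of_lt j.isLt]
      rw [hj]
      exact hs i
    have hZ : (⟨n - 1, Nat.sub_lt hn Nat.one_pos⟩ : Fin n) + 1 = (⟨0, hn⟩ : Fin n) := by
      apply Fin.ext
      rw [Fin.val_add, Fin.val_one']
      show (n - 1 + 1 % n) % n = 0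
      rcases Nat.lt_or_ge 1 n with h1 | h1
      · rw [Nat.mod_eq_of_lt h1, Nat.sub_add_cancel (by omega), Nat.mod_self]
      · have hn1 : n = 1 := by omega
        subst hn1
        rfl
    have hwrap := hs ⟨n - 1, Nat.sub_lt hn Nat.one_pos⟩
    rw [hZ] at hwrap
    have hofAdd_pow : ∀ (a : ZMod 2) (k : ℕ), (ofAdd a) ^ k = ofAdd ((k : ZMod 2) * a) := by
      intro a k
      rw [← ofAdd_nsmul, nsmul_eq_mul]
    have hofAdd_zpow : ∀ (a : ZMod 2) (z : ℤ), (ofAdd a) ^ z = ofAdd ((z : ZMod 2) * a) := by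
      intro a z
      rw [← ofAdd_zsmul, zsmul_eq_mul]
    have hneg : ∀ y : ZMod 2, -y = y := by decide
    have h20 : (2 : ZMod 2) = 0 := by decide
    set vt : Option (Fin n) → Multiplicative (ZMod 2) :=
      fun x => Option.elim x (ofAdd (1 : ZMod 2)) (fun _ => 1) with hvt
    have hvt1 : ∀ j : Fin n, vt (some j) ^ 2 = 1 := fun j => one_pow 2
    have hvt2 : ∀ i j : Fin n, (i : ℕ) + 1 = (j : ℕ) →
        vt (some i) ^ 2 ^ p i = vt (some j) ^ 2 ^ q i := fun i j _ => by simp [hvt]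
    have hvt3 : vt (some ⟨n - 1, Nat.sub_lt hn Nat.one_pos⟩) ^
          2 ^ p ⟨n - 1, Nat.sub_lt hn Nat.one_pos⟩
        = vt (some ⟨0, hn⟩) ^ (-((2 : ℤ) ^ q ⟨n - 1, Nat.sub_lt hn Nat.one_pos⟩)) := by
      simp [hvt]
    set ψt := Stmt16Aux.toHom hn p q vt hvt1 hvt2 hvt3 with hψt
    set vb : Option (Fin n) → Multiplicative (ZMod 2) :=
      fun x => Option.elim x 1 (fun i => ofAdd (s i)) with hvb
    have hvb1 : ∀ j : Fin n, vb (some j) ^ 2 = 1 := fun j => by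
      show (ofAdd (s j)) ^ 2 = 1
      rw [hofAdd_pow, Nat.cast_ofNat, h20, zero_mul, ofAdd_zero]
    have hvb2 : ∀ i j : Fin n, (i : ℕ) + 1 = (j : ℕ) →
        vb (some i) ^ 2 ^ p i = vb (some j) ^ 2 ^ q i := by
      intro i j hij
      show (ofAdd (s i)) ^ 2 ^ p i = (ofAdd (s j)) ^ 2 ^ q i
      rw [hofAdd_pow, hofAdd_pow, Nat.cast_pow, Nat.cast_pow, Nat.cast_ofNat]
      exact congrArg ofAdd (hstep2 i j hij)
    have hvb3 : vb (some ⟨n - 1, Nat.sub_lt hn Nat.one_pos⟩) ^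
          2 ^ p ⟨n - 1, Nat.sub_lt hn Nat.one_pos⟩
        = vb (some ⟨0, hn⟩) ^ (-((2 : ℤ) ^ q ⟨n - 1, Nat.sub_lt hn Nat.one_pos⟩)) := by
      show (ofAdd (s _)) ^ 2 ^ p _ = (ofAdd (s _)) ^ (-((2 : ℤ) ^ q _))
      rw [hofAdd_pow, hofAdd_zpow, Nat.cast_pow, Nat.cast_ofNat, Int.cast_neg, Int.cast_pow,
        Int.cast_ofNat, hneg]
      exact congrArg ofAdd hwrap
    set ψb := Stmt16Aux.toHom hn p q vb hvb1 hvb2 hvb3 with hψb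
    have e1 : ψt (PresentedGroup.of none) = ofAdd (1 : ZMod 2) :=
      Stmt16Aux.toHom_of hn p q vt hvt1 hvt2 hvt3 none
    have e2 : ψb (PresentedGroup.of none) = 1 :=
      Stmt16Aux.toHom_of hn p q vb hvb1 hvb2 hvb3 none
    have e3 : ψb (PresentedGroup.of (some i0)) = ofAdd (s i0) :=
      Stmt16Aux.toHom_of hn p q vb hvb1 hvb2 hvb3 (some i0)
    have hsne : ofAdd (s i0) ≠ 1 := by
      intro hh
      apply hi0
      have := congrArg toAdd hh
      simpa using this
    have hone : ofAdd (1 : ZMod 2) ≠ 1 := by decide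
    refine Stmt16Aux.three_homs e 1 ψt ψb ?_ ?_ ?_
    · intro hh
      apply hone
      rw [← e1, ← hh]
      rfl
    · intro hh
      apply hsne
      rw [← e3, ← hh]
      rfl
    · intro hh
      apply hone
      rw [← e1, hh, e2]
  · intro hcond
    have hB2 := Stmt16Aux.ab_sq hn p q
    have hstep := Stmt16Aux.ab_step hn p q
    have hall : ∀ i : Fin n,
        Abelianization.of (PresentedGroup.of (rels := echinusNegRels n hn p q) (some i)) = 1 := by
      apply Stmt16Aux.allB p q
        (fun i => Abelianization.of (PresentedGroup.of (rels := echinusNegRels n hn p q) (some i)))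
        hB2 hstep
      rcases hcond with ⟨h1, h2⟩ | ⟨h1, h2⟩
      · exact Or.inl ⟨(hsum p).mp h1, h2⟩
      · exact Or.inr ⟨(hsum q).mp h2, h1⟩
    set vz : Option (Fin n) → Multiplicative ℤ :=
      fun x => Option.elim x (ofAdd (1 : ℤ)) (fun _ => 1) with hvz
    have hz1 : ∀ j : Fin n, vz (some j) ^ 2 = 1 := fun j => one_pow 2
    have hz2 : ∀ i j : Fin n, (i : ℕ) + 1 = (j : ℕ) →
        vz (some i) ^ 2 ^ p i = vz (some j) ^ 2 ^ q i := fun i j _ => by simp [hvz]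
    have hz3 : vz (some ⟨n - 1, Nat.sub_lt hn Nat.one_pos⟩) ^
          2 ^ p ⟨n - 1, Nat.sub_lt hn Nat.one_pos⟩
        = vz (some ⟨0, hn⟩) ^ (-((2 : ℤ) ^ q ⟨n - 1, Nat.sub_lt hn Nat.one_pos⟩)) := by
      simp [hvz]
    set φ := Stmt16Aux.toHom hn p q vz hz1 hz2 hz3 with hφ
    set Φ := Abelianization.lift φ with hΦ
    set T := Abelianization.of (PresentedGroup.of (rels := echinusNegRels n hn p q) none) with hT
    set Ψ := zpowersHom (Abelianization (PresentedGroup (echinusNegRels n hn p q))) T with hΨ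
    have hΦT : Φ T = ofAdd (1 : ℤ) := by
      rw [hT, hΦ, Abelianization.lift_apply_of]
      exact Stmt16Aux.toHom_of hn p q vz hz1 hz2 hz3 none
    have hcomp : Ψ.comp Φ = MonoidHom.id _ := by
      apply Abelianization.hom_ext
      apply PresentedGroup.ext
      intro x
      show Ψ (Φ (Abelianization.of (PresentedGroup.of x))) = Abelianization.of (PresentedGroup.of x)
      rw [hΦ, Abelianization.lift_apply_of, hφ, Stmt16Aux.toHom_of]
      cases x with
      | none =>
        show Ψ (ofAdd (1 : ℤ)) = _
        rw [hΨ, zpowersHom_apply]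
        simp [hT]
      | some i =>
        show Ψ 1 = _
        rw [map_one, hall i]
    have hcomp2 : Φ.comp Ψ = MonoidHom.id (Multiplicative ℤ) := by
      apply MonoidHom.ext_mint
      show Φ (Ψ (ofAdd 1)) = ofAdd 1
      rw [hΨ, zpowersHom_apply]
      simp only [toAdd_ofAdd, zpow_one]
      exact hΦT
    exact ⟨{ toFun := Φ, invFun := Ψ,
             left_inv := fun x => DFunLike.congr_fun hcomp x,
             right_inv := fun x => DFunLike.congr_fun hcomp2 x,
             map_mul' := map_mul Φ }⟩
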